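/- Let A ⊆ Ã be a C*-inclusion and X ⊆ Ã a closed aperiodic A-subbimodule with X = X*. Then the quotient map A → Ã/X is isometric, i.e. ‖a + b‖ ≥ ‖a‖ for all a ∈ A and b ∈ X. -/

import Mathlib

open scoped ComplexOrder ComplexInnerProductSpace
open Filter Topology

noncomputable section

section Hereditary

variable {A : Type*} [NonUnitalNormedRing A] [StarRing A] [Module ℂ A] [PartialOrder A]

/-- A hereditary subalgebra of a C*-algebra. -/
def IsHereditary (D : NonUnitalStarSubalgebra ℂ A) : Prop :=
  ∀ a d : A, d ∈ D → 0 ≤ a → a ≤ d → a ∈ D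

/-- A non-zero, closed, hereditary C*-subalgebra. -/
def NontrivClosedHereditary (D : NonUnitalStarSubalgebra ℂ A) : Prop :=
  IsClosed (D : Set A) ∧ (∃ d ∈ D, d ≠ 0) ∧ IsHereditary D

end Hereditary

section Aux

variable {A : Type*} [NormedRing A] [StarRing A] [CStarRing A] [NormedAlgebra ℂ A]
  [StarModule ℂ A] [PartialOrder A] [StarOrderedRing A] [CompleteSpace A]

/-- The "corner" subalgebra determined by a selfadjoint element `e`. -/
def cornerAlg (e : A) (he : IsSelfAdjoint e) : NonUnitalStarSubalgebra ℂ A where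
  carrier := {x | e * x = x ∧ x * e = x}
  add_mem' := fun hx hy => by
    refine ⟨?_, ?_⟩ <;> simp [mul_add, add_mul, hx.1, hx.2, hy.1, hy.2]
  zero_mem' := by simp
  mul_mem' := fun hx hy => ⟨by rw [← mul_assoc, hx.1], by rw [mul_assoc, hy.2]⟩
  smul_mem' := fun c x hx => ⟨by rw [mul_smul_comm, hx.1], by rw [smul_mul_assoc, hx.2]⟩
  star_mem' := fun hx => by
    refine ⟨?_, ?_⟩
    · rw [← he.star_eq, ← star_mul, hx.2]
    · rw [← he.star_eq, ← star_mul, hx.1]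

lemma mem_cornerAlg_iff {e : A} {he : IsSelfAdjoint e} {x : A} :
    x ∈ cornerAlg e he ↔ e * x = x ∧ x * e = x := Iff.rfl

lemma cornerAlg_isClosed (e : A) (he : IsSelfAdjoint e) : IsClosed ((cornerAlg e he : Set A)) := by
  have h1 : IsClosed {x : A | e * x = x} :=
    isClosed_eq (continuous_const.mul continuous_id) continuous_id
  have h2 : IsClosed {x : A | x * e = x} :=
    isClosed_eq (continuous_id.mul continuous_const) continuous_id
  exact h1.inter h2

lemma cornerAlg_hereditary (e : A) (he : IsSelfAdjoint e) : IsHereditary (cornerAlg e he) := by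
  letI : CStarAlgebra A := {}
  intro a d hd ha had
  have hd1 : e * d = d := hd.1
  have hd2 : d * e = d := hd.2
  set u : A := 1 - e with hu
  have hus : IsSelfAdjoint u := by
    rw [hu]; exact (IsSelfAdjoint.one A).sub he
  have hudu : u * d * u = 0 := by
    have : u * d = 0 := by rw [hu, sub_mul, one_mul, hd1, sub_self]
    rw [this, zero_mul]
  have h0 : (0 : A) ≤ u * a * u := by
    simpa [hus.star_eq] using star_left_conjugate_le_conjugate ha u
  have h1 : u * a * u ≤ u * d * u := by
    simpa [hus.star_eq] using star_left_conjugate_le_conjugate had u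
  have huau : u * a * u = 0 := le_antisymm (hudu ▸ h1) h0
  set s : A := cfc Real.sqrt a with hs
  have hs0 : (0 : A) ≤ s := cfc_nonneg fun x _ => Real.sqrt_nonneg x
  have hss : s * s = a := by
    rw [hs, ← cfc_mul Real.sqrt Real.sqrt a]
    conv_rhs => rw [← cfc_id ℝ a (IsSelfAdjoint.of_nonneg ha)]
    exact cfc_congr fun x hx => Real.mul_self_sqrt (spectrum_nonneg_of_nonneg ha hx)
  have hsu : s * u = 0 := by
    have hnorm : ‖s * u‖ * ‖s * u‖ = 0 := by
      rw [← CStarRing.norm_star_mul_self]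
      have : star (s * u) * (s * u) = u * a * u := by
        rw [star_mul, hus.star_eq, (IsSelfAdjoint.of_nonneg hs0).star_eq]
        rw [mul_assoc, ← mul_assoc s s u, hss, ← mul_assoc]
      rw [this, huau, norm_zero]
    have : ‖s * u‖ = 0 := by nlinarith [norm_nonneg (s * u)]
    exact norm_eq_zero.mp this
  have hae : a * e = a := by
    have : a * u = 0 := by rw [← hss, mul_assoc, hsu, mul_zero]
    have h' : a * (1 - e) = 0 := this
    rw [mul_sub, mul_one, sub_eq_zero] at h'
    exact h'.symm
  have hea : e * a = a := by
    have := congrArg star hae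
    rwa [star_mul, he.star_eq, (IsSelfAdjoint.of_nonneg ha).star_eq] at this
  exact ⟨hea, hae⟩

lemma exists_good_hereditary (a : A) (ha : a ≠ 0) {ε : ℝ} (hε : 0 < ε) :
    ∃ D : NonUnitalStarSubalgebra ℂ A, NontrivClosedHereditary D ∧
      ∀ x ∈ D, 0 ≤ x → ‖x‖ = 1 → ‖a‖ ^ 2 - ε ≤ ‖x * (star a * a) * x‖ := by
  letI : CStarAlgebra A := {}
  haveI : Nontrivial A := nontrivial_of_ne a 0 ha
  set h : A := star a * a with hh
  have hh0 : (0:A) ≤ h := star_mul_self_nonneg a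
  have hhsa : IsSelfAdjoint h := .of_nonneg hh0
  set M : ℝ := ‖h‖ with hM
  have hM2 : M = ‖a‖ ^ 2 := by rw [hM, hh, CStarRing.norm_star_mul_self, sq]
  have hMpos : 0 < M := by
    rw [hM2]
    have : 0 < ‖a‖ := norm_pos_iff.mpr ha
    positivity
  set δ : ℝ := min (ε/2) (M/2) with hδ
  have hδpos : 0 < δ := lt_min (by linarith) (by linarith)
  have hδM : 0 ≤ M - 2*δ := by
    have := min_le_right (ε/2) (M/2); rw [← hδ] at this; linarith
  have hδε : M - ε ≤ M - 2*δ := by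
    have := min_le_left (ε/2) (M/2); rw [← hδ] at this; linarith
  set f : ℝ → ℝ := fun t => max 0 (min 1 ((t - (M - 2*δ))/δ)) with hf
  set g : ℝ → ℝ := fun t => max 0 (min 1 ((t - (M - δ))/δ)) with hg
  have hfc : Continuous f := by
    apply Continuous.max continuous_const
    exact Continuous.min continuous_const ((continuous_id.sub continuous_const).div_const δ)
  have hgc : Continuous g := by
    apply Continuous.max continuous_const
    exact Continuous.min continuous_const ((continuous_id.sub continuous_const).div_const δ)
  have hf_one : ∀ t, M - δ < t → f t = 1 := by
    intro t ht
    have h1 : (1:ℝ) ≤ (t - (M - 2*δ))/δ := by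
      rw [le_div_iff₀ hδpos]; linarith
    simp only [hf, min_eq_left h1, max_eq_right (zero_le_one)]
  have hg_zero : ∀ t, t ≤ M - δ → g t = 0 := by
    intro t ht
    have h1 : (t - (M - δ))/δ ≤ 0 := div_nonpos_of_nonpos_of_nonneg (by linarith) hδpos.le
    simp only [hg, min_eq_right (h1.trans zero_le_one), max_eq_left h1]
  have hfg : ∀ t, f t * g t = g t := by
    intro t
    rcases le_or_gt t (M - δ) with ht | ht
    · rw [hg_zero t ht, mul_zero]
    · rw [hf_one t ht, one_mul]
  set e : A := cfc f h with he
  have hesa : IsSelfAdjoint e := cfc_predicate f h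
  set d : A := cfc g h with hd
  refine ⟨cornerAlg e hesa, ⟨cornerAlg_isClosed e hesa, ⟨d, ?_, ?_⟩, cornerAlg_hereditary e hesa⟩, ?_⟩
  · -- d ∈ cornerAlg
    constructor
    · rw [he, hd, ← cfc_mul f g h hfc.continuousOn hgc.continuousOn]
      exact cfc_congr fun t _ => hfg t
    · rw [he, hd, ← cfc_mul g f h hgc.continuousOn hfc.continuousOn]
      exact cfc_congr fun t _ => (mul_comm (g t) (f t)).trans (hfg t)
  · -- d ≠ 0
    have hMspec : M ∈ spectrum ℝ h := CStarAlgebra.norm_mem_spectrum_of_nonneg hh0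
    have hgM : g M = 1 := by
      have h1 : (1:ℝ) ≤ (M - (M - δ))/δ := by rw [le_div_iff₀ hδpos]; linarith
      simp only [hg, min_eq_left h1, max_eq_right (zero_le_one)]
    have hspec : spectrum ℝ (cfc g h) = g '' spectrum ℝ h :=
      cfc_map_spectrum (R := ℝ) (f := g) (a := h) hhsa hgc.continuousOn
    have hone : (1:ℝ) ∈ spectrum ℝ d := by
      rw [hd, hspec]
      exact ⟨M, hMspec, hgM⟩
    intro hd0
    rw [hd0, spectrum.zero_eq] at hone
    simp at hone
  · -- the estimate
    intro x hxD hx0 hx1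
    have hex : e * x = x := hxD.1
    have hxe : x * e = x := hxD.2
    have hxsa : IsSelfAdjoint x := .of_nonneg hx0
    have h1 : cfc (fun t => (M - 2*δ) * (f t * f t)) h ≤ cfc (fun t => f t * (t * f t)) h := by
      apply cfc_mono (hf := (continuous_const.mul (hfc.mul hfc)).continuousOn)
        (hg := (hfc.mul (continuous_id.mul hfc)).continuousOn)
      intro t _
      rcases eq_or_ne (f t) 0 with hft | hft
      · simp [hft]
      · have hft0 : 0 < f t := lt_of_le_of_ne (le_max_left 0 _) (Ne.symm hft)
        have htM : M - 2*δ ≤ t := by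
          by_contra hcon
          push_neg at hcon
          have : (t - (M - 2*δ))/δ ≤ 0 :=
            div_nonpos_of_nonpos_of_nonneg (by linarith) hδpos.le
          have : f t = 0 := by
            simp only [hf, min_eq_right (this.trans zero_le_one), max_eq_left this]
          exact hft this
        simp only [Pi.mul_apply, id_eq]
        nlinarith [mul_le_mul_of_nonneg_right htM (mul_nonneg hft0.le hft0.le)]
    have hL : cfc (fun t => (M - 2*δ) * (f t * f t)) h = (M - 2*δ) • (e * e) := by
      rw [he, ← cfc_mul f f h hfc.continuousOn hfc.continuousOn,
        ← cfc_smul (M - 2*δ) (fun t => f t * f t) h (hfc.mul hfc).continuousOn]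
      exact cfc_congr fun t _ => by simp [smul_eq_mul]
    have hR : cfc (fun t => f t * (t * f t)) h = e * (h * e) := by
      rw [cfc_mul f (fun t => t * f t) h hfc.continuousOn
          ((continuous_id.mul hfc).continuousOn), ← he,
        cfc_mul (fun t : ℝ => t) f h continuous_id.continuousOn hfc.continuousOn,
        cfc_id' ℝ h hhsa, ← he]
    rw [hL, hR] at h1
    have h2 : x * ((M - 2*δ) • (e*e)) * x ≤ x * (e*(h*e)) * x :=
      hxsa.conjugate_le_conjugate h1
    have hrwR : x * (e*(h*e)) * x = x * h * x := by
      rw [show x * (e * (h * e)) * x = (x*e) * h * (e*x) by simp only [mul_assoc], hxe, hex]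
    have hrwL : x * ((M - 2*δ) • (e*e)) * x = (M - 2*δ) • (x*x) := by
      rw [mul_smul_comm, smul_mul_assoc]
      congr 1
      rw [show x * (e*e) * x = (x*e) * (e*x) by simp only [mul_assoc], hxe, hex]
    rw [hrwR, hrwL] at h2
    have hxxpos : (0:A) ≤ (M - 2*δ) • (x*x) := by
      apply smul_nonneg hδM
      simpa [hxsa.star_eq] using star_mul_self_nonneg x
    have hnorm := CStarAlgebra.norm_le_norm_of_nonneg_of_le hxxpos h2
    have hxx1 : ‖x * x‖ = 1 := by
      calc ‖x*x‖ = ‖star x * x‖ := by rw [hxsa.star_eq]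
      _ = ‖x‖*‖x‖ := CStarRing.norm_star_mul_self
      _ = 1 := by rw [hx1]; ring
    rw [norm_smul, Real.norm_eq_abs, abs_of_nonneg hδM, hxx1, mul_one] at hnorm
    rw [← hM2]
    linarith

end Aux


section Incl

variable {A B : Type*}
  [NormedRing A] [StarRing A] [NormedAlgebra ℂ A] [PartialOrder A]
  [NormedRing B] [StarRing B] [NormedAlgebra ℂ B]

/-- Kishimoto's condition for an element of `B`, viewed as an `A`-bimodule via `j`. -/
def KishimotoElem (j : A →⋆ₐ[ℂ] B) (x : B) : Prop :=
  ∀ D : NonUnitalStarSubalgebra ℂ A, NontrivClosedHereditary D →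
    ∀ ε : ℝ, 0 < ε → ∃ a ∈ D, 0 ≤ a ∧ ‖a‖ = 1 ∧ ‖j a * x * j a‖ < ε

/-- Kishimoto's condition for an element of the quotient bimodule `B/A`. -/
def KishimotoQuot (j : A →⋆ₐ[ℂ] B) (x : B) : Prop :=
  ∀ D : NonUnitalStarSubalgebra ℂ A, NontrivClosedHereditary D →
    ∀ ε : ℝ, 0 < ε → ∃ a ∈ D, 0 ≤ a ∧ ‖a‖ = 1 ∧ ∃ y : A, ‖j a * x * j a - j y‖ < ε

/-- The C*-inclusion `j : A → B` is aperiodic if the Banach `A`-bimodule `B/A`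
is aperiodic. -/
def AperiodicInclusion (j : A →⋆ₐ[ℂ] B) : Prop := ∀ x : B, KishimotoQuot j x

/-- An `A`-subbimodule of `B` (with `B` an `A`-bimodule via `j`). -/
def IsSubBimodule (j : A →⋆ₐ[ℂ] B) (S : Submodule ℂ B) : Prop :=
  ∀ a : A, ∀ x ∈ S, j a * x ∈ S ∧ x * j a ∈ S

/-- The inclusion `j : A → B` is anti-aperiodic: `B` contains no non-zero aperiodic
`A`-subbimodule. -/
def AntiAperiodic (j : A →⋆ₐ[ℂ] B) : Prop :=
  ∀ S : Submodule ℂ B, IsSubBimodule j S → (∀ x ∈ S, KishimotoElem j x) → S = ⊥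

end Incl

/-- if `X ⊆ Ã` is a closed aperiodic `A`-subbimodule with `X = X*`, then the
quotient map `A → Ã/X` is isometric: `‖a + b‖ ≥ ‖a‖` for all `a ∈ A` and `b ∈ X`. -/
theorem quotient_by_aperiodic_subbimodule_isometric
    {A C : Type*} [NormedRing A] [StarRing A] [CStarRing A] [NormedAlgebra ℂ A]
    [StarModule ℂ A] [PartialOrder A] [StarOrderedRing A] [CompleteSpace A]
    [NormedRing C] [StarRing C] [CStarRing C] [NormedAlgebra ℂ C]
    [StarModule ℂ C] [PartialOrder C] [StarOrderedRing C] [CompleteSpace C]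
    (ι : A →⋆ₐ[ℂ] C) (hι : Isometry ι)
    (X : Submodule ℂ C) (hXc : IsClosed (X : Set C)) (hXb : IsSubBimodule ι X)
    (hXstar : ∀ x ∈ X, star x ∈ X) (hXap : ∀ x ∈ X, KishimotoElem ι x) :
    ∀ (a : A), ∀ b ∈ X, ‖a‖ ≤ ‖ι a + b‖ := by
  intro a b hb
  rcases eq_or_ne a 0 with rfl | ha
  · simpa using norm_nonneg (ι (0:A) + b)
  have hy0 : ∀ x : A, ‖ι x‖ = ‖x‖ := fun x => hι.norm_map_of_map_zero (map_zero ι) x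
  have key : ∀ ε : ℝ, 0 < ε → ‖a‖ ^ 2 - 2*ε ≤ ‖ι a + b‖ ^ 2 := by
    intro ε hε
    obtain ⟨D, hD, hDest⟩ := exists_good_hereditary a ha hε
    set c : C := ι (star a) * b + star b * ι a with hc_def
    have hc : c ∈ X := X.add_mem (hXb (star a) b hb).1 (hXb a (star b) (hXstar b hb)).2
    obtain ⟨x, hxD, hx0, hx1, hxc⟩ := hXap c hc D hD ε hε
    have key1 := hDest x hxD hx0 hx1
    set y : C := ι x with hy
    have hxsa : IsSelfAdjoint x := .of_nonneg hx0
    have hysa : star y = y := by rw [hy, ← map_star, hxsa.star_eq]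
    set T : C := ι a + b with hT
    have hexp : y * (star T * T) * y
        = ι (x * (star a * a) * x) + (y * c * y + y * (star b * b) * y) := by
      have h1 : ι (x * (star a * a) * x) = y * (ι (star a) * ι a) * y := by
        rw [hy]; simp only [map_mul, mul_assoc]
      rw [hT, hc_def, h1]
      simp only [star_add, map_star]
      noncomm_ring
    have hTy : y * (star T * T) * y = star (T * y) * (T * y) := by
      rw [star_mul, hysa]; noncomm_ring
    have hineqA : ‖y * (star T * T) * y‖ ≤ ‖T‖ ^ 2 := by
      rw [hTy, CStarRing.norm_star_mul_self]
      have hle : ‖T * y‖ ≤ ‖T‖ := by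
        calc ‖T*y‖ ≤ ‖T‖ * ‖y‖ := norm_mul_le _ _
        _ = ‖T‖ := by rw [hy, hy0 x, hx1, mul_one]
      calc ‖T*y‖*‖T*y‖ ≤ ‖T‖*‖T‖ := mul_le_mul hle hle (norm_nonneg _) (norm_nonneg _)
      _ = ‖T‖^2 := (sq ‖T‖).symm
    have hbby : (0:C) ≤ y * (star b * b) * y := by
      have hrw : y * (star b * b) * y = star (b * y) * (b * y) := by
        rw [star_mul, hysa]; noncomm_ring
      rw [hrw]; exact star_mul_self_nonneg _
    have hpos : (0:C) ≤ ι (x * (star a * a) * x) := by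
      have hrw : x * (star a * a) * x = star (a * x) * (a * x) := by
        rw [star_mul, hxsa.star_eq]; noncomm_ring
      rw [hrw, map_mul, map_star]
      exact star_mul_self_nonneg _
    have hineqB : ‖ι (x * (star a * a) * x)‖
        ≤ ‖ι (x * (star a * a) * x) + y * (star b * b) * y‖ := by
      letI : CStarAlgebra C := {}
      exact CStarAlgebra.norm_le_norm_of_nonneg_of_le hpos (le_add_of_nonneg_right hbby)
    have hineqC : ‖ι (x * (star a * a) * x) + y * (star b * b) * y‖
        ≤ ‖y * (star T * T) * y‖ + ‖y * c * y‖ := by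
      have hrw : ι (x * (star a * a) * x) + y * (star b * b) * y
          = y * (star T * T) * y - y * c * y := by rw [hexp]; abel
      rw [hrw]; exact norm_sub_le _ _
    have hnx : ‖x * (star a * a) * x‖ = ‖ι (x * (star a * a) * x)‖ := (hy0 _).symm
    rw [hnx] at key1
    linarith [hxc.le, key1, hineqA, hineqB, hineqC]
  have h2 : ‖a‖ ^ 2 ≤ ‖ι a + b‖ ^ 2 := by
    by_contra hcon
    push_neg at hcon
    have hεp : 0 < (‖a‖^2 - ‖ι a + b‖^2)/4 := by linarith
    have := key _ hεp
    linarith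
  exact (pow_le_pow_iff_left₀ (norm_nonneg a) (norm_nonneg _) two_ne_zero).mp h2
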